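/- Let h be a Γ-equivariant continuous hermitian metric. Then for every compact subset C ⊆ G there exists a constant M > 0, depending only on C, such that h(gc)(v, v) ≤ M · h(g)(v, v) for all c ∈ C, all g ∈ G and all v ∈ V. -/

import Mathlib

open MeasureTheory

/-- A `Γ`-equivariant continuous hermitian metric on the trivial `V`-bundle over `G`:
a continuous assignment `g ↦ h g` of a hermitian inner product on `V`
(conjugate-linear in the first variable, linear in the second) satisfying
`h (γ * g) (χ γ v) (χ γ w) = h g v w`. -/
def IsEquivariantHermitianMetric {G V : Type*} [Group G] [TopologicalSpace G]
    [NormedAddCommGroup V] [NormedSpace ℂ V]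
    (Γ : Subgroup G) (χ : Γ →* (V →ₗ[ℂ] V)ˣ) (h : G → V → V → ℂ) : Prop :=
  Continuous (fun p : G × V × V => h p.1 p.2.1 p.2.2) ∧
  (∀ (g : G) (v w w' : V), h g v (w + w') = h g v w + h g v w') ∧
  (∀ (g : G) (a : ℂ) (v w : V), h g v (a • w) = a * h g v w) ∧
  (∀ (g : G) (v w : V), h g w v = (starRingEnd ℂ) (h g v w)) ∧
  (∀ (g : G) (v : V), v ≠ 0 → 0 < (h g v v).re) ∧
  (∀ (γ : Γ) (g : G) (v w : V),
    h ((γ : G) * g) ((χ γ : V →ₗ[ℂ] V) v) ((χ γ : V →ₗ[ℂ] V) w) = h g v w)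

/-- For a `Γ`-equivariant continuous hermitian metric `h` and every
compact `C ⊆ G` there is a constant `M > 0` with
`h (g * c) (v, v) ≤ M * h g (v, v)` for all `c ∈ C`, `g ∈ G`, `v ∈ V`. -/
theorem exists_uniform_bound_on_compact_of_equivariant_metric
    {G V : Type*} [Group G] [TopologicalSpace G] [IsTopologicalGroup G]
    [LocallyCompactSpace G] [T2Space G] [SecondCountableTopology G]
    [MeasurableSpace G] [BorelSpace G] (μ : Measure G)
    [μ.IsHaarMeasure] [μ.IsMulRightInvariant]
    [NormedAddCommGroup V] [NormedSpace ℂ V] [FiniteDimensional ℂ V] [Nontrivial V]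
    (Γ : Subgroup G) [DiscreteTopology Γ]
    (hcocompact : ∃ C : Set G, IsCompact C ∧ ∀ g : G, ∃ γ ∈ Γ, γ * g ∈ C)
    (χ : Γ →* (V →ₗ[ℂ] V)ˣ)
    (h : G → V → V → ℂ) (hh : IsEquivariantHermitianMetric Γ χ h) :
    ∀ C : Set G, IsCompact C → ∃ M : ℝ, 0 < M ∧
      ∀ c ∈ C, ∀ (g : G) (v : V), (h (g * c) v v).re ≤ M * (h g v v).re := by

  obtain ⟨hcont, hadd, hsmul, hsymm, hpos, hequiv⟩ := hh
  obtain ⟨D, hD, hDfs⟩ := hcocompact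
  -- conjugate-linearity in the first variable
  have hsmul1 : ∀ (g : G) (a : ℂ) (v w : V),
      h g (a • v) w = (starRingEnd ℂ) a * h g v w := by
    intro g a v w
    rw [hsymm g w (a • v), hsmul, map_mul, ← hsymm g w v]
  have hz : ∀ (g : G) (v : V), h g v (0 : V) = 0 := by
    intro g v
    have h2 := hadd g v 0 0
    rw [add_zero] at h2
    linear_combination -h2
  have hz' : ∀ g : G, h g (0 : V) (0 : V) = 0 := by
    intro g; exact hz g 0
  intro C hC
  rcases C.eq_empty_or_nonempty with rfl | hCne
  · exact ⟨1, one_pos, by simp⟩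
  obtain ⟨γ0, hγ0Γ, hγ0⟩ := hDfs 1
  have hDne : D.Nonempty := ⟨_, hγ0⟩
  obtain ⟨c0, hc0⟩ := hCne
  haveI : ProperSpace V := FiniteDimensional.proper ℂ V
  obtain ⟨u0, hu0⟩ : (Metric.sphere (0 : V) 1).Nonempty :=
    NormedSpace.sphere_nonempty.mpr zero_le_one
  set K : Set (G × G × V) := D ×ˢ C ×ˢ Metric.sphere (0 : V) 1 with hKdef
  have hKc : IsCompact K := hD.prod (hC.prod (isCompact_sphere 0 1))
  have hKne : K.Nonempty := ⟨⟨γ0 * 1, c0, u0⟩, ⟨hγ0, hc0, hu0⟩⟩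
  set f : G × G × V → ℝ :=
    fun p => (h (p.1 * p.2.1) p.2.2 p.2.2).re / (h p.1 p.2.2 p.2.2).re with hfdef
  have hnum : Continuous fun p : G × G × V => (h (p.1 * p.2.1) p.2.2 p.2.2).re := by
    apply Complex.continuous_re.comp
    exact hcont.comp ((continuous_fst.mul (continuous_fst.comp continuous_snd)).prodMk
      ((continuous_snd.comp continuous_snd).prodMk (continuous_snd.comp continuous_snd)))
  have hden : Continuous fun p : G × G × V => (h p.1 p.2.2 p.2.2).re := by
    apply Complex.continuous_re.comp
    exact hcont.comp (continuous_fst.prodMk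
      ((continuous_snd.comp continuous_snd).prodMk (continuous_snd.comp continuous_snd)))
  have hdenpos : ∀ p ∈ K, 0 < (h p.1 p.2.2 p.2.2).re := by
    intro p hp
    have hv : p.2.2 ≠ 0 := by
      have : ‖p.2.2‖ = 1 := by
        have := hp.2.2
        simpa [Metric.mem_sphere, dist_eq_norm] using this
      intro h0; rw [h0] at this; simp at this
    exact hpos _ _ hv
  have hfc : ContinuousOn f K := by
    apply hnum.continuousOn.div hden.continuousOn
    intro p hp
    exact ne_of_gt (hdenpos p hp)
  obtain ⟨p0, hp0K, hp0⟩ := hKc.exists_isMaxOn hKne hfc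
  refine ⟨max (f p0) 1, lt_of_lt_of_le one_pos (le_max_right _ _), ?_⟩
  intro c hc g v
  by_cases hv : v = 0
  · subst hv
    rw [hz', hz']
    simp
  obtain ⟨γ, hγΓ, hγg⟩ := hDfs g
  set γ' : Γ := ⟨γ, hγΓ⟩ with hγ'def
  set w : V := (χ γ' : V →ₗ[ℂ] V) v with hwdef
  have hwne : w ≠ 0 := by
    intro h0
    apply hv
    have h1 := congrArg (fun m : V →ₗ[ℂ] V => m v)
      (congrArg Units.val (inv_mul_cancel (χ γ')))
    simp only [Units.val_mul, Module.End.mul_apply, Units.val_one, Module.End.one_apply] at h1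
    rw [← hwdef, h0] at h1
    simpa using h1.symm
  set r : ℝ := ‖w‖ with hrdef
  have hr : 0 < r := norm_pos_iff.mpr hwne
  set u : V := ((r : ℂ))⁻¹ • w with hudef
  have hu : u ∈ Metric.sphere (0 : V) 1 := by
    simp only [Metric.mem_sphere, dist_zero_right, hudef, norm_smul]
    rw [norm_inv, Complex.norm_real, Real.norm_eq_abs, abs_of_pos hr]
    field_simp
    exact hrdef.symm
  have hwu : w = (r : ℂ) • u := by
    rw [hudef, smul_inv_smul₀]
    exact_mod_cast ne_of_gt (by exact_mod_cast hr : (0:ℝ) < r)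
  have hscale : ∀ x : G, (h x w w).re = r * r * (h x u u).re := by
    intro x
    rw [hwu, hsmul1, hsmul, Complex.conj_ofReal]
    rw [← mul_assoc, ← Complex.ofReal_mul]
    rw [Complex.re_ofReal_mul]
  -- relate h at g and at γ * g
  have heq1 : h (g * c) v v = h ((γ * g) * c) w w := by
    have := hequiv γ' (g * c) v v
    rw [← this, hγ'def, mul_assoc]
  have heq2 : h g v v = h (γ * g) w w := by
    have := hequiv γ' g v v
    rw [← this, hγ'def]
  have hpK : (⟨γ * g, c, u⟩ : G × G × V) ∈ K := ⟨hγg, hc, hu⟩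
  have hfle : f (γ * g, c, u) ≤ max (f p0) 1 :=
    le_trans (hp0 hpK) (le_max_left _ _)
  have hdpos : 0 < (h (γ * g) u u).re := hdenpos _ hpK
  have hkey : (h ((γ * g) * c) u u).re ≤ max (f p0) 1 * (h (γ * g) u u).re := by
    rw [hfdef] at hfle
    exact (div_le_iff₀ hdpos).mp hfle
  rw [heq1, heq2, hscale, hscale]
  have hrr : 0 ≤ r * r := mul_nonneg hr.le hr.le
  calc r * r * (h ((γ * g) * c) u u).re
      ≤ r * r * (max (f p0) 1 * (h (γ * g) u u).re) := by
        exact mul_le_mul_of_nonneg_left hkey hrr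
    _ = max (f p0) 1 * (r * r * (h (γ * g) u u).re) := by ring
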